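/- For every continuously differentiable function u : [0,1] → ℝ with u'(0) = 0 and u(1) = 0 (or merely u(1) = 0), the Poincaré inequality ∫_0^1 u(x)² dx ≤ (4/π²) ∫_0^1 u'(x)² dx holds. -/

import Mathlib

open Set intervalIntegral

noncomputable def pnd_phi (x : ℝ) : ℝ := Real.pi / 2 * Real.tan (Real.pi / 2 * x)

lemma pnd_cos_pos {x : ℝ} (hx : x ∈ Ico (0:ℝ) 1) : 0 < Real.cos (Real.pi / 2 * x) := by
  apply Real.cos_pos_of_mem_Ioo
  constructor
  · nlinarith [Real.pi_pos, hx.1, hx.2]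
  · nlinarith [Real.pi_pos, hx.1, hx.2]

lemma pnd_phi_nonneg {x : ℝ} (hx : x ∈ Ico (0:ℝ) 1) : 0 ≤ pnd_phi x := by
  have hc := pnd_cos_pos hx
  have hs : 0 ≤ Real.sin (Real.pi / 2 * x) := by
    apply Real.sin_nonneg_of_nonneg_of_le_pi
    · nlinarith [Real.pi_pos, hx.1]
    · nlinarith [Real.pi_pos, hx.1, hx.2]
  unfold pnd_phi
  rw [Real.tan_eq_sin_div_cos]
  have := Real.pi_pos
  positivity

lemma pnd_phi_le {x : ℝ} (hx : x ∈ Ico (0:ℝ) 1) :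
    pnd_phi x ≤ Real.pi / 2 * (1 / (1 - x)) := by
  have hc := pnd_cos_pos hx
  have hcos_ge : 1 - x ≤ Real.cos (Real.pi / 2 * x) := by
    have h := Real.one_sub_mul_le_cos (x := Real.pi / 2 * x)
      (by nlinarith [Real.pi_pos, hx.1]) (by nlinarith [Real.pi_pos, hx.2])
    have hpi := Real.pi_pos
    calc 1 - x = 1 - 2 / Real.pi * (Real.pi / 2 * x) := by field_simp
    _ ≤ _ := h
  have hsin : Real.sin (Real.pi / 2 * x) ≤ 1 := Real.sin_le_one _
  have h1x : (0:ℝ) < 1 - x := by linarith [hx.2]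
  unfold pnd_phi
  rw [Real.tan_eq_sin_div_cos]
  have hpi := Real.pi_pos
  have : Real.sin (Real.pi / 2 * x) / Real.cos (Real.pi / 2 * x) ≤ 1 / (1 - x) := by
    rw [div_le_div_iff₀ hc h1x]
    nlinarith
  nlinarith

lemma pnd_phi_hasDerivAt {x : ℝ} (hx : x ∈ Ico (0:ℝ) 1) :
    HasDerivAt pnd_phi (Real.pi ^ 2 / 4 + pnd_phi x ^ 2) x := by
  have hc := (pnd_cos_pos hx).ne'
  have h1 : HasDerivAt (fun y : ℝ => Real.pi / 2 * y) (Real.pi / 2) x := by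
    simpa using (hasDerivAt_id x).const_mul (Real.pi / 2)
  have h2 := (Real.hasDerivAt_tan hc).comp x h1
  have h3 := h2.const_mul (Real.pi / 2)
  refine h3.congr_deriv ?_
  have hgoal : Real.pi ^ 2 / 4 + pnd_phi x ^ 2
      = Real.pi ^ 2 / 4 * (Real.tan (Real.pi / 2 * x) ^ 2 + 1) := by
    unfold pnd_phi; ring
  have htan : Real.tan (Real.pi / 2 * x) ^ 2 + 1 = 1 / Real.cos (Real.pi / 2 * x) ^ 2 := by
    have hc2 : (Real.cos (Real.pi / 2 * x)) ^ 2 ≠ 0 := pow_ne_zero _ hc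
    rw [Real.tan_eq_sin_div_cos, div_pow, eq_div_iff hc2, add_mul,
      div_mul_cancel₀ _ hc2, one_mul, Real.sin_sq_add_cos_sq]
  rw [hgoal, htan]
  ring

lemma pnd_phi_continuousOn : ContinuousOn pnd_phi (Ico (0:ℝ) 1) := by
  intro x hx
  exact ((pnd_phi_hasDerivAt hx).continuousAt).continuousWithinAt

set_option maxHeartbeats 1000000 in
theorem poincare_mixed_neumann_dirichlet
    (u u' : ℝ → ℝ)
    (hu_deriv : ∀ x ∈ Icc (0:ℝ) 1, HasDerivWithinAt u (u' x) (Icc (0:ℝ) 1) x)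
    (hu'_cont : ContinuousOn u' (Icc (0:ℝ) 1))
    (hu1 : u 1 = 0) :
    (∫ x in (0:ℝ)..1, u x ^ 2) ≤ (4 / Real.pi ^ 2) * ∫ x in (0:ℝ)..1, u' x ^ 2 := by
  have hpi := Real.pi_pos
  have hu_cont : ContinuousOn u (Icc (0:ℝ) 1) :=
    fun x hx => (hu_deriv x hx).continuousWithinAt
  -- bound on u'
  obtain ⟨M, hM⟩ : ∃ M, ∀ x ∈ Icc (0:ℝ) 1, |u' x| ≤ M := by
    obtain ⟨M, hM⟩ := (isCompact_Icc.image_of_continuousOn hu'_cont).isBounded.subset_closedBall 0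
    exact ⟨M, fun x hx => by simpa [Real.norm_eq_abs] using hM (mem_image_of_mem u' hx)⟩
  have hM0 : 0 ≤ M := le_trans (abs_nonneg _) (hM 0 ⟨le_refl 0, zero_le_one⟩)
  -- inner derivative of u at interior points
  have hu_deriv' : ∀ x ∈ Ioo (0:ℝ) 1, HasDerivAt u (u' x) x := by
    intro x hx
    exact (hu_deriv x (Ioo_subset_Icc_self hx)).hasDerivAt (Icc_mem_nhds hx.1 hx.2)
  -- FTC for u on [t,1]
  have hu_ftc : ∀ t ∈ Icc (0:ℝ) 1, ∫ x in t..1, u' x = - u t := by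
    intro t ht
    have := integral_eq_sub_of_hasDeriv_right_of_le (f := u) (f' := u') ht.2
      (hu_cont.mono (Icc_subset_Icc ht.1 le_rfl))
      (fun x hx => (hu_deriv' x ⟨lt_of_le_of_lt ht.1 hx.1, hx.2⟩).hasDerivWithinAt)
      ((hu'_cont.mono (Icc_subset_Icc ht.1 le_rfl)).intervalIntegrable_of_Icc ht.2)
    rw [this, hu1, zero_sub]
  have hu_bound : ∀ t ∈ Icc (0:ℝ) 1, |u t| ≤ M * (1 - t) := by
    intro t ht
    have h1 : |u t| = ‖∫ x in t..1, u' x‖ := by rw [hu_ftc t ht]; simp [Real.norm_eq_abs]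
    rw [h1]
    have := intervalIntegral.norm_integral_le_of_norm_le_const (C := M) (f := u') (a := t) (b := 1)
      (fun x hx => by
        rw [uIoc_of_le ht.2] at hx
        exact hM x ⟨le_of_lt (lt_of_le_of_lt ht.1 hx.1), hx.2⟩)
    calc ‖∫ x in t..1, u' x‖ ≤ M * |1 - t| := this
    _ = M * (1 - t) := by rw [abs_of_nonneg (by linarith [ht.2])]
  -- notation
  set A := ∫ x in (0:ℝ)..1, u' x ^ 2 with hA
  set B := ∫ x in (0:ℝ)..1, u x ^ 2 with hB
  -- the key inequality on [0,t] for t < 1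
  have key : ∀ t ∈ Ico (0:ℝ) 1,
      -((Real.pi / 2 + Real.pi ^ 2 / 4) * M ^ 2 * (1 - t)) ≤ A - Real.pi ^ 2 / 4 * B := by
    intro t ht
    have ht1 : t ≤ 1 := le_of_lt ht.2
    have hsub1 : Icc (0:ℝ) t ⊆ Icc 0 1 := Icc_subset_Icc le_rfl ht1
    have hsub2 : Icc (0:ℝ) t ⊆ Ico 0 1 := Icc_subset_Ico_right ht.2
    have hsubt : Icc t (1:ℝ) ⊆ Icc 0 1 := Icc_subset_Icc ht.1 le_rfl
    -- continuity on [0,t]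
    have hcu : ContinuousOn u (Icc 0 t) := hu_cont.mono hsub1
    have hcu' : ContinuousOn u' (Icc 0 t) := hu'_cont.mono hsub1
    have hcφ : ContinuousOn pnd_phi (Icc 0 t) := pnd_phi_continuousOn.mono hsub2
    -- integrability
    have hint1 : IntervalIntegrable (fun x => u' x ^ 2) MeasureTheory.volume 0 t :=
      ((hcu'.pow 2).intervalIntegrable_of_Icc ht.1)
    have hint2 : IntervalIntegrable (fun x => u x ^ 2) MeasureTheory.volume 0 t :=
      ((hcu.pow 2).intervalIntegrable_of_Icc ht.1)
    have hint3 : IntervalIntegrable (fun x => (u' x + pnd_phi x * u x) ^ 2)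
        MeasureTheory.volume 0 t :=
      (((hcu'.add (hcφ.mul hcu)).pow 2).intervalIntegrable_of_Icc ht.1)
    -- FTC for G := fun x => -(pnd_phi x * u x ^ 2) on [0,t]
    have hG : ∫ x in (0:ℝ)..t,
        (u' x ^ 2 - Real.pi ^ 2 / 4 * u x ^ 2 - (u' x + pnd_phi x * u x) ^ 2)
        = -(pnd_phi t * u t ^ 2) := by
      have hGcont : ContinuousOn (fun x => -(pnd_phi x * u x ^ 2)) (Icc 0 t) :=
        ((hcφ.mul (hcu.pow 2)).neg)
      have hGderiv : ∀ x ∈ Ioo (0:ℝ) t,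
          HasDerivWithinAt (fun x => -(pnd_phi x * u x ^ 2))
            (u' x ^ 2 - Real.pi ^ 2 / 4 * u x ^ 2 - (u' x + pnd_phi x * u x) ^ 2) (Ioi x) x := by
        intro x hx
        have hx1 : x ∈ Ioo (0:ℝ) 1 := ⟨hx.1, lt_trans hx.2 ht.2⟩
        have hxIco : x ∈ Ico (0:ℝ) 1 := ⟨le_of_lt hx1.1, hx1.2⟩
        have hud := hu_deriv' x hx1
        have hd : HasDerivAt (fun x => -(pnd_phi x * u x ^ 2))
            (-((Real.pi ^ 2 / 4 + pnd_phi x ^ 2) * u x ^ 2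
              + pnd_phi x * ((2 : ℕ) * u x ^ 1 * u' x))) x :=
          ((pnd_phi_hasDerivAt hxIco).mul (hud.pow 2)).neg
        have heq : u' x ^ 2 - Real.pi ^ 2 / 4 * u x ^ 2 - (u' x + pnd_phi x * u x) ^ 2
            = -((Real.pi ^ 2 / 4 + pnd_phi x ^ 2) * u x ^ 2
              + pnd_phi x * ((2 : ℕ) * u x ^ 1 * u' x)) := by push_cast; ring
        rw [heq]
        exact hd.hasDerivWithinAt
      have hintG : IntervalIntegrable
          (fun x => u' x ^ 2 - Real.pi ^ 2 / 4 * u x ^ 2 - (u' x + pnd_phi x * u x) ^ 2)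
          MeasureTheory.volume 0 t :=
        (hint1.sub (hint2.const_mul _)).sub hint3
      have := integral_eq_sub_of_hasDeriv_right_of_le ht.1 hGcont hGderiv hintG
      rw [this]
      simp [pnd_phi]
    -- split the FTC integral
    have hsplit : ∫ x in (0:ℝ)..t,
        (u' x ^ 2 - Real.pi ^ 2 / 4 * u x ^ 2 - (u' x + pnd_phi x * u x) ^ 2)
        = (∫ x in (0:ℝ)..t, u' x ^ 2) - Real.pi ^ 2 / 4 * (∫ x in (0:ℝ)..t, u x ^ 2)
          - ∫ x in (0:ℝ)..t, (u' x + pnd_phi x * u x) ^ 2 := by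
      rw [intervalIntegral.integral_sub (hint1.sub (hint2.const_mul _)) hint3,
        intervalIntegral.integral_sub hint1 (hint2.const_mul _),
        intervalIntegral.integral_const_mul]
    have hpos : 0 ≤ ∫ x in (0:ℝ)..t, (u' x + pnd_phi x * u x) ^ 2 :=
      intervalIntegral.integral_nonneg ht.1 (fun x _ => sq_nonneg _)
    -- bound for G t
    have h1t : (0:ℝ) < 1 - t := by linarith [ht.2]
    have hφt : pnd_phi t ≤ Real.pi / 2 * (1 / (1 - t)) := pnd_phi_le ht
    have hφt0 : 0 ≤ pnd_phi t := pnd_phi_nonneg ht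
    have hut : u t ^ 2 ≤ (M * (1 - t)) ^ 2 := by
      have := hu_bound t ⟨ht.1, ht1⟩
      nlinarith [abs_nonneg (u t), sq_abs (u t)]
    have hGt : -(Real.pi / 2 * M ^ 2 * (1 - t)) ≤ -(pnd_phi t * u t ^ 2) := by
      have h2 : pnd_phi t * u t ^ 2 ≤ Real.pi / 2 * (1 / (1 - t)) * (M * (1 - t)) ^ 2 :=
        mul_le_mul hφt hut (sq_nonneg _) (by positivity)
      have h3 : Real.pi / 2 * (1 / (1 - t)) * (M * (1 - t)) ^ 2
          = Real.pi / 2 * M ^ 2 * (1 - t) := by field_simp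
      linarith
    -- the main inequality on [0,t]
    have hmain : -(Real.pi / 2 * M ^ 2 * (1 - t))
        ≤ (∫ x in (0:ℝ)..t, u' x ^ 2) - Real.pi ^ 2 / 4 * (∫ x in (0:ℝ)..t, u x ^ 2) := by
      have := hG
      rw [hsplit] at this
      linarith
    -- tail estimates
    have hint1' : IntervalIntegrable (fun x => u' x ^ 2) MeasureTheory.volume t 1 :=
      (((hu'_cont.mono hsubt).pow 2).intervalIntegrable_of_Icc ht1)
    have hint2' : IntervalIntegrable (fun x => u x ^ 2) MeasureTheory.volume t 1 :=
      (((hu_cont.mono hsubt).pow 2).intervalIntegrable_of_Icc ht1)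
    have htail1 : 0 ≤ ∫ x in t..1, u' x ^ 2 :=
      intervalIntegral.integral_nonneg ht1 (fun x _ => sq_nonneg _)
    have htail2 : ∫ x in t..1, u x ^ 2 ≤ M ^ 2 * (1 - t) := by
      have hb : ∀ x ∈ uIoc t (1:ℝ), ‖u x ^ 2‖ ≤ M ^ 2 := by
        intro x hx
        rw [uIoc_of_le ht1] at hx
        have hx1 : x ∈ Icc (0:ℝ) 1 := ⟨le_trans ht.1 (le_of_lt hx.1), hx.2⟩
        have := hu_bound x hx1
        have h1x : 1 - x ≤ 1 := by linarith [le_trans ht.1 (le_of_lt hx.1)]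
        rw [Real.norm_eq_abs, abs_of_nonneg (sq_nonneg _)]
        have h0x : 0 ≤ 1 - x := by linarith [hx1.2]
        have hle : |u x| ≤ M := le_trans this (by nlinarith)
        nlinarith [sq_abs (u x), abs_nonneg (u x)]
      have := intervalIntegral.norm_integral_le_of_norm_le_const hb
      rw [Real.norm_eq_abs] at this
      have habs : |1 - t| = 1 - t := abs_of_nonneg (by linarith)
      calc ∫ x in t..1, u x ^ 2 ≤ |∫ x in t..1, u x ^ 2| := le_abs_self _
      _ ≤ M ^ 2 * |1 - t| := this
      _ = M ^ 2 * (1 - t) := by rw [habs]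
    -- splitting the full integrals
    have hA' : A = (∫ x in (0:ℝ)..t, u' x ^ 2) + ∫ x in t..1, u' x ^ 2 :=
      (intervalIntegral.integral_add_adjacent_intervals hint1 hint1').symm
    have hB' : B = (∫ x in (0:ℝ)..t, u x ^ 2) + ∫ x in t..1, u x ^ 2 :=
      (intervalIntegral.integral_add_adjacent_intervals hint2 hint2').symm
    have hpiM : 0 ≤ Real.pi ^ 2 / 4 := by positivity
    rw [hA', hB']
    nlinarith [mul_le_mul_of_nonneg_left htail2 hpiM]
  -- conclude nonnegativity by letting t → 1
  have hD : 0 ≤ A - Real.pi ^ 2 / 4 * B := by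
    set C := (Real.pi / 2 + Real.pi ^ 2 / 4) * M ^ 2 with hC
    have hC0 : 0 ≤ C := by positivity
    have hAll : ∀ ε > (0:ℝ), 0 ≤ A - Real.pi ^ 2 / 4 * B + ε := by
      intro ε hε
      set δ := min 1 (ε / (C + 1)) with hδ
      have hδpos : 0 < δ := lt_min one_pos (by positivity)
      have hδ1 : δ ≤ 1 := min_le_left _ _
      have hδε : C * δ ≤ ε := by
        have h1 : δ ≤ ε / (C + 1) := min_le_right _ _
        have h2 : C * δ ≤ C * (ε / (C + 1)) := mul_le_mul_of_nonneg_left h1 hC0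
        have h3 : C * (ε / (C + 1)) ≤ ε := by
          rw [div_eq_inv_mul, ← mul_assoc]
          have : C * (C + 1)⁻¹ ≤ 1 := by
            rw [mul_inv_le_iff₀ (by linarith)]
            linarith
          nlinarith [le_of_lt hε]
        linarith
      have ht : (1 - δ) ∈ Ico (0:ℝ) 1 := ⟨by linarith, by linarith⟩
      have := key (1 - δ) ht
      have h4 : (1 : ℝ) - (1 - δ) = δ := by ring
      rw [h4] at this
      linarith
    exact le_of_forall_pos_le_add hAll
  -- final algebra
  have h4 : 4 / Real.pi ^ 2 * A - B = 4 / Real.pi ^ 2 * (A - Real.pi ^ 2 / 4 * B) := by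
    field_simp
  have h5 : 0 ≤ 4 / Real.pi ^ 2 * (A - Real.pi ^ 2 / 4 * B) :=
    mul_nonneg (by positivity) hD
  linarith
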